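/- Symmetric (PSB) implies non-flatness at infinity. In the abstract symmetrization framework, let X be a Banach space and f ∈ C¹(X) bounded from below such that: (i) f(u^H) ≤ f(u) and ‖u^H‖ = ‖u‖ for all u ∈ S and H ∈ ℋ*; (ii) for every u ∈ X there exists ξ ∈ S with f(ξ) ≤ f(u) and ‖ξ‖ = ‖u‖; (iii) f satisfies the symmetric (PSB) condition: every sequence (u_h) ⊂ X with (f(u_h)) bounded, ‖df(u_h)‖_{X'} → 0 and ‖u_h − u_h*‖_V → 0 is bounded in X. Then liminf_{‖u‖→+∞} f(u) > inf_X f. -/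

import Mathlib

open Filter Topology Metric Set

/-- Ekeland-type variational principle (non-strict version). -/
lemma my_ekeland {X : Type*} [NormedAddCommGroup X] [NormedSpace ℝ X] [CompleteSpace X]
    (f : X → ℝ) (hc : Continuous f) (m : ℝ) (hm : ∀ x, m ≤ f x)
    {σ : ℝ} (hσ : 0 < σ) (v : X) {ε : ℝ} (hε : 0 < ε) (hv : f v ≤ m + ε) :
    ∃ w : X, f w ≤ f v ∧ ‖w - v‖ ≤ ε / σ ∧ ∀ z, f w ≤ f z + σ * ‖z - w‖ := by
  set rel : X → X → Prop := fun x y => f x + σ * ‖x - y‖ ≤ f y with hrel_def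
  have hrefl : ∀ x, rel x x := by intro x; simp [hrel_def]
  have htrans : ∀ a b c, rel a b → rel b c → rel a c := by
    intro a b c hab hbc
    have h3 : ‖a - c‖ ≤ ‖a - b‖ + ‖b - c‖ := norm_sub_le_norm_sub_add_norm_sub a b c
    simp only [hrel_def] at *
    nlinarith [hσ.le]
  have hle : ∀ a b, rel a b → f a ≤ f b := by
    intro a b hab
    have := mul_nonneg hσ.le (norm_nonneg (a - b))
    simp only [hrel_def] at hab; linarith
  set g : X → ℝ := fun y => sInf (f '' {x | rel x y}) with hg_def
  have hgne : ∀ y, (f '' {x | rel x y}).Nonempty := fun y => ⟨f y, y, hrefl y, rfl⟩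
  have hgbdd : ∀ y, BddBelow (f '' {x | rel x y}) := by
    intro y; exact ⟨m, by rintro z ⟨x, -, rfl⟩; exact hm x⟩
  have hgle : ∀ x y, rel x y → g y ≤ f x := fun x y hxy =>
    csInf_le (hgbdd y) ⟨x, hxy, rfl⟩
  have key : ∀ (y : X) (n : ℕ), ∃ x, rel x y ∧ f x < g y + 1 / (n + 1) := by
    intro y n
    have hlt : g y < g y + 1 / (n + 1) := by
      have : (0:ℝ) < 1 / ((n:ℝ) + 1) := by positivity
      linarith
    obtain ⟨z, ⟨x, hx, rfl⟩, hzlt⟩ := exists_lt_of_csInf_lt (hgne y) hlt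
    exact ⟨x, hx, hzlt⟩
  choose F hF1 hF2 using key
  set x : ℕ → X := fun n => Nat.rec v (fun n ih => F ih n) n with hx_def
  have hx0 : x 0 = v := rfl
  have hxs : ∀ n, x (n + 1) = F (x n) n := fun n => rfl
  have hstep : ∀ n, rel (x (n + 1)) (x n) := fun n => hF1 (x n) n
  have hmono : ∀ n k, rel (x (n + k)) (x n) := by
    intro n k
    induction k with
    | zero => exact hrefl _
    | succ k ih => exact htrans _ _ _ (hstep (n + k)) ih
  have hmono' : ∀ n k, n ≤ k → rel (x k) (x n) := by
    intro n k hnk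
    obtain ⟨j, rfl⟩ := Nat.exists_eq_add_of_le hnk
    exact hmono n j
  have hanti : Antitone (fun n => f (x n)) := by
    intro a b hab; exact hle _ _ (hmono' a b hab)
  have hbdd : BddBelow (Set.range fun n => f (x n)) := by
    exact ⟨m, by rintro z ⟨n, rfl⟩; exact hm _⟩
  set L : ℝ := ⨅ n, f (x n) with hL_def
  have hLle : ∀ n, L ≤ f (x n) := fun n => ciInf_le hbdd n
  have hLtend : Tendsto (fun n => f (x n)) atTop (𝓝 L) :=
    tendsto_atTop_ciInf hanti hbdd
  have hcauchy : CauchySeq x := by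
    apply cauchySeq_of_le_tendsto_0 (fun n => 2 * (f (x n) - L) / σ)
    · intro a b N hNa hNb
      have ha : σ * ‖x a - x N‖ ≤ f (x N) - f (x a) := by
        have := hmono' N a hNa; simp only [hrel_def] at this; linarith
      have hb : σ * ‖x b - x N‖ ≤ f (x N) - f (x b) := by
        have := hmono' N b hNb; simp only [hrel_def] at this; linarith
      have htri : dist (x a) (x b) ≤ ‖x a - x N‖ + ‖x b - x N‖ := by
        rw [dist_eq_norm]
        have : x a - x b = (x a - x N) - (x b - x N) := by abel
        rw [this]; exact norm_sub_le _ _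
      rw [le_div_iff₀ hσ]
      have h1 := hLle a; have h2 := hLle b
      calc dist (x a) (x b) * σ ≤ (‖x a - x N‖ + ‖x b - x N‖) * σ := by
            apply mul_le_mul_of_nonneg_right htri hσ.le
        _ ≤ 2 * (f (x N) - L) := by nlinarith
    · have : Tendsto (fun n => f (x n) - L) atTop (𝓝 0) := by
        have h := hLtend.sub_const L; simpa using h
      have := (this.const_mul 2).div_const σ
      simpa using this
  obtain ⟨w, hw⟩ := cauchySeq_tendsto_of_complete hcauchy
  have hfw : f w = L :=
    tendsto_nhds_unique (((hc.tendsto w).comp hw)) hLtend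
  have hrelw : ∀ n, rel w (x n) := by
    intro n
    have htt : Tendsto (fun k => f (x k) + σ * ‖x k - x n‖) atTop
        (𝓝 (f w + σ * ‖w - x n‖)) := by
      exact (((hc.tendsto w).comp hw)).add
        (((hw.sub tendsto_const_nhds).norm).const_mul σ)
    refine le_of_tendsto htt ?_
    filter_upwards [eventually_ge_atTop n] with k hk
    exact hmono' n k hk
  have hwv : rel w v := by rw [← hx0]; exact hrelw 0
  have hfwv : f w ≤ f v := hle _ _ hwv
  refine ⟨w, hfwv, ?_, ?_⟩
  · have h1 : σ * ‖w - v‖ ≤ f v - f w := by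
      simp only [hrel_def] at hwv; linarith
    have h2 : f v - f w ≤ ε := by have := hm w; linarith
    rw [le_div_iff₀ hσ]; linarith [mul_comm σ ‖w - v‖]
  · intro z
    by_contra hcon
    push_neg at hcon
    have hrelz : rel z w := by simp only [hrel_def]; linarith
    have hzlt : f z < f w := by
      have := mul_nonneg hσ.le (norm_nonneg (z - w)); linarith
    have hLz : L ≤ f z := by
      have hbound : ∀ n : ℕ, f (x (n + 1)) ≤ f z + 1 / (n + 1) := by
        intro n
        have hzxn : rel z (x n) := htrans _ _ _ hrelz (hrelw n)
        have := hgle z (x n) hzxn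
        have := hF2 (x n) n
        rw [← hxs n] at this
        linarith
      have ht1 : Tendsto (fun n : ℕ => f (x (n + 1))) atTop (𝓝 L) :=
        hLtend.comp (tendsto_add_atTop_nat 1)
      have ht2 : Tendsto (fun n : ℕ => f z + 1 / ((n:ℝ) + 1)) atTop (𝓝 (f z)) := by
        simpa using tendsto_const_nhds.add (tendsto_one_div_add_atTop_nhds_zero_nat :
          Tendsto (fun n : ℕ => 1 / ((n:ℝ) + 1)) atTop (𝓝 0))
      exact le_of_tendsto_of_tendsto' ht1 ht2 hbound
    rw [← hfw] at hLz
    have := mul_nonneg hσ.le (norm_nonneg (z - w))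
    linarith

/-- If `w` is a `σ`-approximate minimizer, the derivative at `w` has norm at most `σ`. -/
lemma my_deriv_bound {X : Type*} [NormedAddCommGroup X] [NormedSpace ℝ X]
    {f : X → ℝ} {D : X →L[ℝ] ℝ} {w : X} (hD : HasFDerivAt f D w)
    {σ : ℝ} (hσ : 0 ≤ σ) (hmin : ∀ z, f w ≤ f z + σ * ‖z - w‖) : ‖D‖ ≤ σ := by
  apply ContinuousLinearMap.opNorm_le_bound _ hσ
  have keydir : ∀ e : X, D e ≤ σ * ‖e‖ := by
    intro e
    have hγ : HasDerivAt (fun t : ℝ => w + t • e) e 0 := by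
      simpa using ((hasDerivAt_id (0:ℝ)).smul_const e).const_add w
    have hD' : HasFDerivAt f D ((fun t : ℝ => w + t • e) 0) := by simpa using hD
    have hg : HasDerivAt (fun t : ℝ => f (w + t • e)) (D e) 0 :=
      hD'.comp_hasDerivAt 0 hγ
    have hslope := hasDerivAt_iff_tendsto_slope.mp hg
    have hmonol : 𝓝[<] (0:ℝ) ≤ 𝓝[≠] (0:ℝ) :=
      nhdsWithin_mono 0 (fun t ht => ne_of_lt ht)
    have hslope' := hslope.mono_left hmonol
    refine le_of_tendsto hslope' ?_
    filter_upwards [self_mem_nhdsWithin] with t (ht : t < 0)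
    have hz := hmin (w + t • e)
    have hnorm : ‖(w + t • e) - w‖ = |t| * ‖e‖ := by
      simp [norm_smul]
    rw [hnorm] at hz
    have habs : |t| = -t := abs_of_neg ht
    rw [habs] at hz
    -- hz : f w ≤ f (w + t•e) + σ * (-t * ‖e‖)
    have hslope_eq : slope (fun t : ℝ => f (w + t • e)) 0 t
        = (f (w + t • e) - f (w + (0:ℝ) • e)) / t := by
      simp [slope_def_field]
    rw [hslope_eq]
    rw [div_le_iff_of_neg ht]
    simp only [zero_smul, add_zero]
    nlinarith
  intro e
  rw [Real.norm_eq_abs]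
  rcases abs_cases (D e) with ⟨h1, _⟩ | ⟨h1, _⟩
  · rw [h1]; exact keydir e
  · rw [h1]
    have := keydir (-e)
    simpa using this
theorem symmetric_PSB_implies_nonflat_at_infinity
    {X : Type*} [NormedAddCommGroup X] [NormedSpace ℝ X] [CompleteSpace X]
    {V : Type*} [NormedAddCommGroup V] [NormedSpace ℝ V] [CompleteSpace V]
    {W : Type*} [NormedAddCommGroup W] [NormedSpace ℝ W] [CompleteSpace W]
    (ι : X →L[ℝ] V) (κ : V →L[ℝ] W)
    (K : ℝ) (hK : 0 < K) (hιK : ∀ u : X, ‖ι u‖ ≤ K * ‖u‖)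
    (S : Set X)
    {P : Type*} [TopologicalSpace P] [PathConnectedSpace P]
    (pol : X → P → X) (sy : X → X)
    (hpolS : ∀ u ∈ S, ∀ H : P, pol u H ∈ S)
    (hsyS : ∀ u : X, sy u ∈ S)
    (hpolCont : ContinuousOn (fun q : X × P => pol q.1 q.2) (S ×ˢ Set.univ))
    (hsypol : ∀ u ∈ S, ∀ H : P,
      pol (sy u) H = sy u ∧ sy (pol u H) = sy u ∧ pol (pol u H) H = pol u H)
    (happrox : ∃ Hs : ℕ → P, ∀ u ∈ S,
      Filter.Tendsto (fun m => ι (List.foldl pol u ((List.range m).map Hs)))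
        Filter.atTop (nhds (ι (sy u))))
    (hpolContr : ∀ u ∈ S, ∀ v ∈ S, ∀ H : P, ‖ι (pol u H) - ι (pol v H)‖ ≤ ‖ι u - ι v‖)
    (Θ : X → X) (CΘ : ℝ) (hCΘ : 0 < CΘ)
    (hΘS : ∀ u : X, Θ u ∈ S) (hΘid : ∀ u ∈ S, Θ u = u)
    (hΘlip : ∀ u v : X, ‖ι (Θ u) - ι (Θ v)‖ ≤ CΘ * ‖ι u - ι v‖)
    (hpolext : ∀ u : X, ∀ H : P, pol u H = pol (Θ u) H)
    (hsyext : ∀ u : X, sy u = sy (Θ u))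
    (T : ℝ → X → X)
    (hTS : ∀ ρ > (0:ℝ), ∀ u ∈ S, T ρ u ∈ S)
    (hTpol : ∀ ρ > (0:ℝ), ∀ u ∈ S, ∃ l : List P, T ρ u = List.foldl pol u l)
    (hTsy : ∀ ρ > (0:ℝ), ∀ u ∈ S, sy (T ρ u) = sy u)
    (hTapprox : ∀ ρ > (0:ℝ), ∀ u ∈ S, ‖ι (T ρ u) - ι (sy u)‖ < ρ)
    (f : X → ℝ) (hf : ContDiff ℝ 1 f) (hfbdd : BddBelow (Set.range f))
    (hfpol : ∀ u ∈ S, ∀ H : P, f (pol u H) ≤ f u ∧ ‖pol u H‖ = ‖u‖)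
    (hfS : ∀ u : X, ∃ ξ ∈ S, f ξ ≤ f u ∧ ‖ξ‖ = ‖u‖)
    (hPSB : ∀ us : ℕ → X, (∃ M : ℝ, ∀ h, |f (us h)| ≤ M) →
      Filter.Tendsto (fun h => ‖fderiv ℝ f (us h)‖) Filter.atTop (nhds 0) →
      Filter.Tendsto (fun h => ‖ι (us h) - ι (sy (us h))‖) Filter.atTop (nhds 0) →
      ∃ M : ℝ, ∀ h, ‖us h‖ ≤ M) :
    ((⨅ w, f w : ℝ) : EReal) <
      Filter.liminf (fun u : X => (f u : EReal))
        (Filter.comap (fun u : X => ‖u‖) Filter.atTop) := by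
  classical
  set m : ℝ := ⨅ w, f w with hm_def
  have hm : ∀ x : X, m ≤ f x := fun x => ciInf_le hfbdd x
  by_contra hcon
  push_neg at hcon
  -- iterated polarization facts
  have foldlS : ∀ (l : List P) (u : X), u ∈ S → List.foldl pol u l ∈ S := by
    intro l
    induction l with
    | nil => intro u hu; simpa using hu
    | cons H t ih => intro u hu; simpa using ih (pol u H) (hpolS u hu H)
  have foldlf : ∀ (l : List P) (u : X), u ∈ S →
      f (List.foldl pol u l) ≤ f u ∧ ‖List.foldl pol u l‖ = ‖u‖ := by
    intro l
    induction l with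
    | nil => intro u hu; simp
    | cons H t ih =>
      intro u hu
      have h1 := hfpol u hu H
      have h2 := ih (pol u H) (hpolS u hu H)
      simp only [List.foldl_cons]
      exact ⟨le_trans h2.1 h1.1, by rw [h2.2, h1.2]⟩
  have foldlContr : ∀ (l : List P) (u v : X), u ∈ S → v ∈ S →
      ‖ι (List.foldl pol u l) - ι (List.foldl pol v l)‖ ≤ ‖ι u - ι v‖ := by
    intro l
    induction l with
    | nil => intro u v _ _; simp
    | cons H t ih =>
      intro u v hu hv
      simp only [List.foldl_cons]
      exact le_trans (ih _ _ (hpolS u hu H) (hpolS v hv H)) (hpolContr u hu v hv H)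
  obtain ⟨Hs, hHs⟩ := happrox
  have syContr : ∀ u ∈ S, ∀ v ∈ S, ‖ι (sy u) - ι (sy v)‖ ≤ ‖ι u - ι v‖ := by
    intro u hu v hv
    have ht : Filter.Tendsto (fun mm : ℕ =>
        ‖ι (List.foldl pol u ((List.range mm).map Hs)) -
          ι (List.foldl pol v ((List.range mm).map Hs))‖) Filter.atTop
        (𝓝 ‖ι (sy u) - ι (sy v)‖) := ((hHs u hu).sub (hHs v hv)).norm
    exact le_of_tendsto ht (Filter.Eventually.of_forall
      (fun mm => foldlContr _ _ _ hu hv))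
  -- step 1 : points with large norm and almost-infimal value
  have step1 : ∀ n : ℕ, ∃ u : X, (n:ℝ) ≤ ‖u‖ ∧ f u < m + 1/((n:ℝ)+1) := by
    intro n
    by_contra hno
    push_neg at hno
    have hev : ∀ᶠ u in (Filter.comap (fun u : X => ‖u‖) Filter.atTop),
        ((m + 1/((n:ℝ)+1) : ℝ) : EReal) ≤ (f u : EReal) := by
      filter_upwards [Filter.preimage_mem_comap (Filter.Ici_mem_atTop (n:ℝ))] with x hx
      exact_mod_cast hno x hx
    have hle' := Filter.le_liminf_of_le (h := hev)
    have : ((m + 1/((n:ℝ)+1) : ℝ) : EReal) ≤ ((m : ℝ) : EReal) := le_trans hle' hcon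
    rw [EReal.coe_le_coe_iff] at this
    have : (0:ℝ) < 1/((n:ℝ)+1) := by positivity
    linarith
  -- step 2 : almost-critical, almost-symmetric points with large norm
  have step2 : ∀ n : ℕ, ∃ wn : X,
      f wn ≤ m + 1/((n:ℝ)+1) ∧
      ‖fderiv ℝ f wn‖ ≤ Real.sqrt (1/((n:ℝ)+1)) ∧
      ‖ι wn - ι (sy wn)‖ ≤ (K + CΘ * K) * Real.sqrt (1/((n:ℝ)+1)) + 1/((n:ℝ)+1) ∧
      (n:ℝ) - 1 ≤ ‖wn‖ := by
    intro n
    set εn : ℝ := 1/((n:ℝ)+1) with hεn_def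
    have hεn : 0 < εn := by positivity
    have hεn1 : εn ≤ 1 := by
      rw [hεn_def, div_le_one (by positivity)]
      have := Nat.cast_nonneg (α := ℝ) n; linarith
    obtain ⟨un, hun1, hun2⟩ := step1 n
    obtain ⟨ξ, hξS, hξf, hξn⟩ := hfS un
    have hvS : T εn ξ ∈ S := hTS εn hεn ξ hξS
    obtain ⟨l, hl⟩ := hTpol εn hεn ξ hξS
    have hvf : f (T εn ξ) ≤ f ξ := by rw [hl]; exact (foldlf l ξ hξS).1
    have hvnorm : ‖T εn ξ‖ = ‖ξ‖ := by rw [hl]; exact (foldlf l ξ hξS).2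
    have hva : ‖ι (T εn ξ) - ι (sy (T εn ξ))‖ < εn := by
      rw [hTsy εn hεn ξ hξS]; exact hTapprox εn hεn ξ hξS
    have hσ : 0 < Real.sqrt εn := Real.sqrt_pos.mpr hεn
    have hσ1 : Real.sqrt εn ≤ 1 := Real.sqrt_le_one.mpr hεn1
    have hfv : f (T εn ξ) ≤ m + εn := by linarith
    obtain ⟨w, hw1, hw2, hw3⟩ := my_ekeland f hf.continuous m hm hσ (T εn ξ) hεn hfv
    rw [Real.div_sqrt] at hw2
    have hD : HasFDerivAt f (fderiv ℝ f w) w := (hf.differentiable one_ne_zero w).hasFDerivAt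
    have hDle : ‖fderiv ℝ f w‖ ≤ Real.sqrt εn := my_deriv_bound hD hσ.le hw3
    have hKs : ‖ι w - ι (T εn ξ)‖ ≤ K * Real.sqrt εn := by
      rw [← map_sub]
      exact le_trans (hιK _) (mul_le_mul_of_nonneg_left hw2 hK.le)
    have hsyb : ‖ι (sy (T εn ξ)) - ι (sy w)‖ ≤ CΘ * (K * Real.sqrt εn) := by
      rw [hsyext (T εn ξ), hsyext w]
      refine le_trans (syContr _ (hΘS _) _ (hΘS _)) ?_
      refine le_trans (hΘlip (T εn ξ) w) ?_
      apply mul_le_mul_of_nonneg_left _ hCΘ.le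
      rw [norm_sub_rev]; exact hKs
    have hasym : ‖ι w - ι (sy w)‖ ≤ (K + CΘ * K) * Real.sqrt εn + εn := by
      have hsplit : ι w - ι (sy w) =
          (ι w - ι (T εn ξ)) + (ι (T εn ξ) - ι (sy (T εn ξ)))
            + (ι (sy (T εn ξ)) - ι (sy w)) := by abel
      calc ‖ι w - ι (sy w)‖
          ≤ ‖ι w - ι (T εn ξ)‖ + ‖ι (T εn ξ) - ι (sy (T εn ξ))‖
            + ‖ι (sy (T εn ξ)) - ι (sy w)‖ := by
            rw [hsplit]; exact norm_add₃_le
        _ ≤ (K + CΘ * K) * Real.sqrt εn + εn := by nlinarith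
    have hnw : (n:ℝ) - 1 ≤ ‖w‖ := by
      have h1 : ‖T εn ξ‖ - ‖w‖ ≤ ‖T εn ξ - w‖ := norm_sub_norm_le _ _
      have h2 : ‖T εn ξ - w‖ = ‖w - T εn ξ‖ := norm_sub_rev _ _
      have h3 : (n:ℝ) ≤ ‖T εn ξ‖ := by rw [hvnorm, hξn]; exact hun1
      linarith
    exact ⟨w, le_trans hw1 hfv, hDle, hasym, hnw⟩
  choose w hw1 hw2 hw3 hw4 using step2
  have hε0 : Filter.Tendsto (fun n : ℕ => 1/((n:ℝ)+1)) Filter.atTop (𝓝 0) :=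
    tendsto_one_div_add_atTop_nhds_zero_nat
  have hsqrt0 : Filter.Tendsto (fun n : ℕ => Real.sqrt (1/((n:ℝ)+1)))
      Filter.atTop (𝓝 0) := by
    have h : Filter.Tendsto (fun n : ℕ => Real.sqrt (1/((n:ℝ)+1)))
        Filter.atTop (𝓝 (Real.sqrt 0)) := (Real.continuous_sqrt.tendsto 0).comp hε0
    rwa [Real.sqrt_zero] at h
  have hA : ∃ M : ℝ, ∀ h, |f (w h)| ≤ M := by
    refine ⟨|m| + 1, fun n => ?_⟩
    have h1 := hm (w n)
    have h2 := hw1 n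
    have hεn1 : 1/((n:ℝ)+1) ≤ 1 := by
      rw [div_le_one (by positivity)]
      have := Nat.cast_nonneg (α := ℝ) n; linarith
    rw [abs_le]
    constructor
    · linarith [neg_abs_le m]
    · linarith [le_abs_self m]
  have hB : Filter.Tendsto (fun h => ‖fderiv ℝ f (w h)‖) Filter.atTop (𝓝 0) :=
    squeeze_zero (fun n => norm_nonneg _) hw2 hsqrt0
  have hC : Filter.Tendsto (fun h => ‖ι (w h) - ι (sy (w h))‖) Filter.atTop (𝓝 0) := by
    refine squeeze_zero (fun n => norm_nonneg _) hw3 ?_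
    have := (hsqrt0.const_mul (K + CΘ * K)).add hε0
    simpa using this
  obtain ⟨M, hM⟩ := hPSB w hA hB hC
  obtain ⟨n, hn⟩ := exists_nat_gt (M + 1)
  have := hw4 n
  have := hM n
  linarith
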